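/- Let Γ be a connected graph with at most countable vertex set E, and consider an irreducible nearest-neighbor Markov chain on E (at each step it stays put or moves to an adjacent vertex) whose transition probability p satisfies p(x,y) > 0 whenever {x,y} is an edge. Suppose ∅ ≠ U_1 ⊆ U_2 ⊆ U_3 are finite strict subsets of E with U_3 connected, and u is a bounded nonnegative function on Ū_3 which is harmonic in U_3. Then max_{U_1} u ≤ K · min_{U_1} u, where K = max_{x,y ∈ U_1} max_{z ∈ ∂_int U_2} G_{U_3}(x,z)/G_{U_3}(y,z). -/

import Mathlib

-- `transPow p n x y` is the `n`-step transition probability of the chain with one-step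
-- transition probability `p`.
open Classical in
noncomputable def transPow {E : Type*} (p : E → E → ℝ) : ℕ → E → E → ℝ
  | 0, x, y => if x = y then 1 else 0
  | n + 1, x, y => ∑' z, p x z * transPow p n z y

-- `stayProb p U k x y` is the probability that the chain started at `x` is at `y` at
-- time `k` while having stayed inside `U` at all times `0, …, k`.
open Classical in
noncomputable def stayProb {E : Type*} (p : E → E → ℝ) (U : Set E) : ℕ → E → E → ℝ
  | 0, x, y => if x = y ∧ x ∈ U then 1 else 0
  | n + 1, x, y => if x ∈ U then ∑' z, p x z * stayProb p U n z y else 0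

/-- The Green function of the chain killed outside `U`:
`G_U(x,y) = Σ_k P_x[X_k = y, T_U > k]`. -/
noncomputable def greenKilled {E : Type*} (p : E → E → ℝ) (U : Set E) (x y : E) : ℝ :=
  ∑' k : ℕ, stayProb p U k x y

section HarnackAux

open Finset Classical

variable {E : Type*} (p : E → E → ℝ) (F : Finset E)

open Classical in
theorem stayProb_zero' (U : Set E) (x y : E) :
    stayProb p U 0 x y = if x = y ∧ x ∈ U then 1 else 0 := rfl

open Classical in
theorem stayProb_succ' (U : Set E) (n : ℕ) (x y : E) :
    stayProb p U (n+1) x y = if x ∈ U then ∑' z, p x z * stayProb p U n z y else 0 := rfl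

theorem stay_left_nmem (n : ℕ) {x : E} (hx : x ∉ F) (y : E) :
    stayProb p (↑F) n x y = 0 := by
  cases n with
  | zero =>
    rw [stayProb_zero', if_neg]
    rintro ⟨-, h⟩; exact hx (by simpa using h)
  | succ n =>
    rw [stayProb_succ', if_neg (by simpa using hx)]

theorem stay_right_nmem (n : ℕ) (x : E) {y : E} (hy : y ∉ F) :
    stayProb p (↑F) n x y = 0 := by
  induction n generalizing x with
  | zero =>
    rw [stayProb_zero', if_neg]
    rintro ⟨rfl, h⟩; exact hy (by simpa using h)
  | succ n ih =>
    rw [stayProb_succ']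
    split
    · have : ∀ z : E, p x z * stayProb p (↑F) n z y = 0 := fun z => by rw [ih z, mul_zero]
      simp [this]
    · rfl

variable {p} in
theorem stay_nonneg (hp : ∀ x y, 0 ≤ p x y) (n : ℕ) (x y : E) :
    0 ≤ stayProb p (↑F) n x y := by
  induction n generalizing x with
  | zero => rw [stayProb_zero']; split <;> norm_num
  | succ n ih =>
    rw [stayProb_succ']
    split
    · exact tsum_nonneg fun z => mul_nonneg (hp x z) (ih z)
    · exact le_rfl

theorem stay_succ_sum (n : ℕ) {x : E} (hx : x ∈ F) (y : E) :
    stayProb p (↑F) (n+1) x y = ∑ z ∈ F, p x z * stayProb p (↑F) n z y := by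
  rw [stayProb_succ', if_pos (by simpa using hx)]
  exact tsum_eq_sum fun z hz => by rw [stay_left_nmem p F n hz y, mul_zero]

theorem stay_last (n : ℕ) (x y : E) :
    stayProb p (↑F) (n+1) x y =
      if y ∈ F then ∑ v ∈ F, stayProb p (↑F) n x v * p v y else 0 := by
  induction n generalizing x with
  | zero =>
    by_cases hx : x ∈ F
    · rw [stay_succ_sum p F 0 hx]
      have h1 : ∀ z ∈ F, p x z * stayProb p (↑F) 0 z y
          = if z = y then (if y ∈ F then p x y else 0) else 0 := by
        intro z hz
        rw [stayProb_zero']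
        by_cases h : z = y
        · subst h; simp [hz]
        · simp [h]
      rw [Finset.sum_congr rfl h1, Finset.sum_ite_eq' F y]
      have h2 : ∀ v ∈ F, stayProb p (↑F) 0 x v * p v y
          = if v = x then p x y else 0 := by
        intro v hv
        rw [stayProb_zero']
        by_cases h : x = v
        · subst h; simp [hx]
        · simp [h, Ne.symm h, fun hh : v = x => h hh.symm]
      by_cases hy : y ∈ F
      · simp only [if_pos hy]
        rw [Finset.sum_congr rfl h2, Finset.sum_ite_eq' F x, if_pos hx]
      · simp [hy]
    · rw [stay_left_nmem p F _ hx]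
      have : ∀ v ∈ F, stayProb p (↑F) 0 x v * p v y = 0 := fun v _ => by
        rw [stay_left_nmem p F _ hx, zero_mul]
      simp [Finset.sum_congr rfl this]
  | succ n ih =>
    by_cases hx : x ∈ F
    · rw [stay_succ_sum p F (n+1) hx]
      have h1 : ∀ z ∈ F, p x z * stayProb p (↑F) (n+1) z y
          = if y ∈ F then ∑ v ∈ F, p x z * (stayProb p (↑F) n z v * p v y) else 0 := by
        intro z hz
        rw [ih z]
        split
        · rw [Finset.mul_sum]
        · rw [mul_zero]
      rw [Finset.sum_congr rfl h1]
      by_cases hy : y ∈ F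
      · simp only [if_pos hy]
        rw [Finset.sum_comm]
        refine Finset.sum_congr rfl fun v hv => ?_
        rw [stay_succ_sum p F n hx, Finset.sum_mul]
        refine Finset.sum_congr rfl fun z hz => ?_
        ring
      · simp [hy]
    · rw [stay_left_nmem p F _ hx]
      have : ∀ v ∈ F, stayProb p (↑F) (n+1) x v * p v y = 0 := fun v _ => by
        rw [stay_left_nmem p F _ hx, zero_mul]
      simp [Finset.sum_congr rfl this]

theorem stay_add (a b : ℕ) (x v : E) :
    stayProb p (↑F) (a+b) x v = ∑ w ∈ F, stayProb p (↑F) a x w * stayProb p (↑F) b w v := by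
  induction b generalizing v with
  | zero =>
    have h1 : ∀ w ∈ F, stayProb p (↑F) a x w * stayProb p (↑F) 0 w v
        = if w = v then (if v ∈ F then stayProb p (↑F) a x v else 0) else 0 := by
      intro w hw
      rw [stayProb_zero']
      by_cases h : w = v
      · subst h; simp [hw]
      · simp [h]
    rw [Finset.sum_congr rfl h1, Finset.sum_ite_eq' F v]
    by_cases hv : v ∈ F
    · simp [hv]
    · simp [hv, stay_right_nmem p F a x hv]
  | succ b ih =>
    have : a + (b+1) = (a+b) + 1 := rfl
    rw [this, stay_last]
    by_cases hv : v ∈ F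
    · simp only [if_pos hv]
      have h1 : ∀ w ∈ F, stayProb p (↑F) (a+b) x w * p w v
          = ∑ z ∈ F, stayProb p (↑F) a x z * stayProb p (↑F) b z w * p w v := by
        intro w hw; rw [ih w, Finset.sum_mul]
      rw [Finset.sum_congr rfl h1, Finset.sum_comm]
      refine Finset.sum_congr rfl fun z hz => ?_
      rw [stay_last, if_pos hv, Finset.mul_sum]
      refine Finset.sum_congr rfl fun w hw => ?_
      ring
    · rw [if_neg hv]
      have : ∀ w ∈ F, stayProb p (↑F) a x w * stayProb p (↑F) (b+1) w v = 0 := fun w _ => by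
        rw [stay_right_nmem p F _ w hv, mul_zero]
      simp [Finset.sum_congr rfl this]

noncomputable def massStay : ℕ → E → ℝ := fun n x => ∑ v ∈ F, stayProb p (↑F) n x v

variable {p} in
theorem mass_nonneg (hp : ∀ x y, 0 ≤ p x y) (n : ℕ) (x : E) : 0 ≤ massStay p F n x :=
  Finset.sum_nonneg fun v _ => stay_nonneg F hp n x v

theorem mass_nmem (n : ℕ) {x : E} (hx : x ∉ F) : massStay p F n x = 0 := by
  unfold massStay
  exact Finset.sum_eq_zero fun v _ => stay_left_nmem p F n hx v

theorem mass_succ (n : ℕ) {x : E} (hx : x ∈ F) :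
    massStay p F (n+1) x = ∑ z ∈ F, p x z * massStay p F n z := by
  unfold massStay
  have h1 : ∀ v ∈ F, stayProb p (↑F) (n+1) x v = ∑ z ∈ F, p x z * stayProb p (↑F) n z v :=
    fun v _ => stay_succ_sum p F n hx v
  rw [Finset.sum_congr rfl h1, Finset.sum_comm]
  exact Finset.sum_congr rfl fun z _ => (Finset.mul_sum _ _ _).symm

variable {p} in
theorem mass_le_one (hp : ∀ x y, 0 ≤ p x y) (hp_sum : ∀ x, HasSum (p x) 1)
    (n : ℕ) (x : E) : massStay p F n x ≤ 1 := by
  induction n generalizing x with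
  | zero =>
    unfold massStay
    have h1 : ∀ v ∈ F, stayProb p (↑F) 0 x v = if v = x then (if x ∈ F then 1 else 0) else 0 := by
      intro v hv
      rw [stayProb_zero']
      by_cases h : v = x
      · subst h; simp [hv]
      · rw [if_neg h, if_neg]; rintro ⟨h2, -⟩; exact h h2.symm
    rw [Finset.sum_congr rfl h1, Finset.sum_ite_eq' F x]
    split <;> norm_num
  | succ n ih =>
    by_cases hx : x ∈ F
    · rw [mass_succ p F n hx]
      calc ∑ z ∈ F, p x z * massStay p F n z ≤ ∑ z ∈ F, p x z := by
            refine Finset.sum_le_sum fun z _ => ?_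
            calc p x z * massStay p F n z ≤ p x z * 1 :=
                  mul_le_mul_of_nonneg_left (ih z) (hp x z)
              _ = p x z := mul_one _
        _ ≤ 1 := sum_le_hasSum F (fun i _ => hp x i) (hp_sum x)
    · rw [mass_nmem p F _ hx]; norm_num

variable {p} in
theorem mass_succ_le (hp : ∀ x y, 0 ≤ p x y) (hp_sum : ∀ x, HasSum (p x) 1)
    (n : ℕ) (x : E) : massStay p F (n+1) x ≤ massStay p F n x := by
  unfold massStay
  have h1 : ∀ y ∈ F, stayProb p (↑F) (n+1) x y = ∑ v ∈ F, stayProb p (↑F) n x v * p v y := by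
    intro y hy; rw [stay_last, if_pos hy]
  rw [Finset.sum_congr rfl h1, Finset.sum_comm]
  refine Finset.sum_le_sum fun v hv => ?_
  calc ∑ y ∈ F, stayProb p (↑F) n x v * p v y = stayProb p (↑F) n x v * ∑ y ∈ F, p v y :=
        (Finset.mul_sum _ _ _).symm
    _ ≤ stayProb p (↑F) n x v * 1 :=
        mul_le_mul_of_nonneg_left (sum_le_hasSum F (fun i _ => hp v i) (hp_sum v))
          (stay_nonneg F hp n x v)
    _ = stayProb p (↑F) n x v := mul_one _

variable {p} in
theorem mass_anti (hp : ∀ x y, 0 ≤ p x y) (hp_sum : ∀ x, HasSum (p x) 1)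
    {a b : ℕ} (hab : a ≤ b) (x : E) : massStay p F b x ≤ massStay p F a x := by
  induction b with
  | zero => rw [Nat.le_zero.mp hab]
  | succ b ih =>
    rcases Nat.lt_or_ge a (b+1) with h | h
    · exact le_trans (mass_succ_le F hp hp_sum b x) (ih (Nat.lt_succ_iff.mp h))
    · rw [Nat.le_antisymm hab h]

theorem mass_add (a b : ℕ) (x : E) :
    massStay p F (a+b) x = ∑ w ∈ F, stayProb p (↑F) a x w * massStay p F b w := by
  unfold massStay
  have h1 : ∀ v ∈ F, stayProb p (↑F) (a+b) x v
      = ∑ w ∈ F, stayProb p (↑F) a x w * stayProb p (↑F) b w v :=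
    fun v _ => stay_add p F a b x v
  rw [Finset.sum_congr rfl h1, Finset.sum_comm]
  exact Finset.sum_congr rfl fun w _ => (Finset.mul_sum _ _ _).symm

variable {p} in
theorem stay_le_mass (hp : ∀ x y, 0 ≤ p x y) (n : ℕ) (x z : E) :
    stayProb p (↑F) n x z ≤ massStay p F n x := by
  by_cases hz : z ∈ F
  · exact Finset.single_le_sum (fun v _ => stay_nonneg F hp n x v) hz
  · rw [stay_right_nmem p F n x hz]
    exact mass_nonneg F hp n x

variable {p} in
theorem mass_step (hp : ∀ x y, 0 ≤ p x y) (hp_sum : ∀ x, HasSum (p x) 1)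
    {n : ℕ} {w b : E} (hw : w ∈ F) (hpb : 0 < p w b) (hb : massStay p F n b < 1) :
    massStay p F (n+1) w < 1 := by
  by_cases hbF : b ∈ F
  · rw [mass_succ p F n hw, ← Finset.add_sum_erase _ _ hbF]
    have h1 : ∑ z ∈ F.erase b, p w z * massStay p F n z ≤ ∑ z ∈ F.erase b, p w z := by
      refine Finset.sum_le_sum fun z _ => ?_
      calc p w z * massStay p F n z ≤ p w z * 1 :=
            mul_le_mul_of_nonneg_left (mass_le_one F hp hp_sum n z) (hp w z)
        _ = p w z := mul_one _
    have h2 : p w b + ∑ z ∈ F.erase b, p w z = ∑ z ∈ F, p w z :=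
      Finset.add_sum_erase _ _ hbF
    have h3 : ∑ z ∈ F, p w z ≤ 1 := sum_le_hasSum F (fun i _ => hp w i) (hp_sum w)
    have h4 : p w b * massStay p F n b < p w b * 1 := by
      exact mul_lt_mul_of_pos_left hb hpb
    nlinarith
  · have h0 : massStay p F (n+1) w ≤ ∑ z ∈ F, p w z := by
      rw [mass_succ p F n hw]
      refine Finset.sum_le_sum fun z _ => ?_
      calc p w z * massStay p F n z ≤ p w z * 1 :=
            mul_le_mul_of_nonneg_left (mass_le_one F hp hp_sum n z) (hp w z)
        _ = p w z := mul_one _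
    have h3 : ∑ z ∈ insert b F, p w z ≤ 1 :=
      sum_le_hasSum _ (fun i _ => hp w i) (hp_sum w)
    rw [Finset.sum_insert hbF] at h3
    linarith

variable {p F} in
theorem exists_mass_lt_one {G : SimpleGraph E}
    (hp : ∀ x y, 0 ≤ p x y) (hp_sum : ∀ x, HasSum (p x) 1)
    (hp_pos : ∀ x y, G.Adj x y → 0 < p x y) :
    ∀ {w o : E}, G.Walk w o → o ∉ F → w ∈ F → ∃ n, massStay p F n w < 1 := by
  intro w o q
  induction q with
  | nil => intro ho hw; exact absurd hw ho
  | @cons a b c hab q ih =>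
    intro ho ha
    by_cases hbF : b ∈ F
    · obtain ⟨n, hn⟩ := ih ho hbF
      exact ⟨n+1, mass_step F hp hp_sum ha (hp_pos a b hab) hn⟩
    · refine ⟨1, mass_step F hp hp_sum ha (hp_pos a b hab) ?_⟩
      rw [mass_nmem p F 0 hbF]; norm_num

variable {p F} in
theorem summable_mass (hp : ∀ x y, 0 ≤ p x y) (hp_sum : ∀ x, HasSum (p x) 1)
    (N : ℕ) (ρ : ℝ) (hρ1 : ρ < 1) (hρ : ∀ w ∈ F, massStay p F N w ≤ ρ) (x : E) :
    Summable (fun n => massStay p F n x) := by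
  have key : ∀ i, massStay p F (i+N) x ≤ ρ * massStay p F i x := by
    intro i
    rw [mass_add]
    calc ∑ w ∈ F, stayProb p (↑F) i x w * massStay p F N w
        ≤ ∑ w ∈ F, stayProb p (↑F) i x w * ρ :=
          Finset.sum_le_sum fun w hw =>
            mul_le_mul_of_nonneg_left (hρ w hw) (stay_nonneg F hp i x w)
      _ = ρ * massStay p F i x := by unfold massStay; rw [← Finset.sum_mul, mul_comm]
  refine summable_of_sum_range_le (fun n => mass_nonneg F hp n x) (fun n => ?_) (c := N / (1-ρ))
  have h1 : ∑ i ∈ Finset.range (N+n), massStay p F i x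
      = ∑ i ∈ Finset.range N, massStay p F i x + ∑ i ∈ Finset.range n, massStay p F (N+i) x :=
    Finset.sum_range_add _ N n
  have h2 : ∑ i ∈ Finset.range n, massStay p F (N+i) x
      ≤ ρ * ∑ i ∈ Finset.range n, massStay p F i x := by
    rw [Finset.mul_sum]
    refine Finset.sum_le_sum fun i _ => ?_
    rw [Nat.add_comm N i]; exact key i
  have h3 : ∑ i ∈ Finset.range n, massStay p F i x
      ≤ ∑ i ∈ Finset.range (N+n), massStay p F i x := by
    refine Finset.sum_le_sum_of_subset_of_nonneg ?_ (fun i _ _ => mass_nonneg F hp i x)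
    exact Finset.range_subset_range.mpr (Nat.le_add_left n N)
  have h4 : ∑ i ∈ Finset.range N, massStay p F i x ≤ (N : ℝ) := by
    calc ∑ i ∈ Finset.range N, massStay p F i x ≤ ∑ i ∈ Finset.range N, (1:ℝ) :=
          Finset.sum_le_sum fun i _ => mass_le_one F hp hp_sum i x
      _ = (N : ℝ) := by simp
  have h5 : (1 - ρ) * ∑ i ∈ Finset.range n, massStay p F i x ≤ (N : ℝ) := by nlinarith
  have hpos : (0:ℝ) < 1 - ρ := by linarith
  rw [le_div_iff₀ hpos]
  nlinarith

variable {p F} in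
theorem summable_stay (hp : ∀ x y, 0 ≤ p x y)
    (hm : Summable (fun n => massStay p F n x)) (z : E) :
    Summable (fun n => stayProb p (↑F) n x z) :=
  Summable.of_nonneg_of_le (fun n => stay_nonneg F hp n x z)
    (fun n => stay_le_mass F hp n x z) hm

open Classical in
noncomputable def escProb (p : E → E → ℝ) (U₂ : Set E) (F : Finset E) : ℕ → E → E → ℝ
  | 0, z, v => if z = v ∧ z ∈ U₂ ∧ z ∈ F then 1 else 0
  | m + 1, z, v => if v ∈ F ∧ v ∉ U₂ then ∑ w ∈ F, escProb p U₂ F m z w * p w v else 0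

open Classical in
theorem escProb_zero (U₂ : Set E) (z v : E) :
    escProb p U₂ F 0 z v = if z = v ∧ z ∈ U₂ ∧ z ∈ F then 1 else 0 := rfl

open Classical in
theorem escProb_succ (U₂ : Set E) (m : ℕ) (z v : E) :
    escProb p U₂ F (m+1) z v
      = if v ∈ F ∧ v ∉ U₂ then ∑ w ∈ F, escProb p U₂ F m z w * p w v else 0 := rfl

variable {p} in
theorem esc_nonneg (hp : ∀ x y, 0 ≤ p x y) (U₂ : Set E) (m : ℕ) (z v : E) :
    0 ≤ escProb p U₂ F m z v := by
  induction m generalizing v with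
  | zero => rw [escProb_zero]; split <;> norm_num
  | succ m ih =>
    rw [escProb_succ]
    split
    · exact Finset.sum_nonneg fun w _ => mul_nonneg (ih w) (hp w v)
    · exact le_rfl

variable {p} in
theorem esc_le_stay (hp : ∀ x y, 0 ≤ p x y) (U₂ : Set E) (m : ℕ) (z v : E) :
    escProb p U₂ F m z v ≤ stayProb p (↑F) m z v := by
  induction m generalizing v with
  | zero =>
    rw [escProb_zero, stayProb_zero']
    split
    · rename_i h
      rw [if_pos ⟨h.1, by simpa using h.2.2⟩]
    · split <;> norm_num
  | succ m ih =>
    rw [escProb_succ, stay_last]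
    split
    · rename_i h
      rw [if_pos h.1]
      exact Finset.sum_le_sum fun w _ => mul_le_mul_of_nonneg_right (ih w) (hp w v)
    · split
      · exact Finset.sum_nonneg fun w _ =>
          mul_nonneg (stay_nonneg F hp m z w) (hp w v)
      · exact le_rfl

theorem esc_supp (U₂ : Set E) (m : ℕ) (z v : E) (h : escProb p U₂ F m z v ≠ 0) :
    z ∈ U₂ ∧ z ∈ F := by
  induction m generalizing v with
  | zero =>
    rw [escProb_zero] at h
    by_cases hc : z = v ∧ z ∈ U₂ ∧ z ∈ F
    · exact ⟨hc.2.1, hc.2.2⟩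
    · rw [if_neg hc] at h; exact absurd rfl h
  | succ m ih =>
    rw [escProb_succ] at h
    split at h
    · obtain ⟨w, _, hw⟩ := Finset.exists_ne_zero_of_sum_ne_zero h
      exact ih w (left_ne_zero_of_mul hw)
    · exact absurd rfl h

theorem esc_first (U₂ : Set E) (m : ℕ) (z v : E) (h : escProb p U₂ F (m+1) z v ≠ 0) :
    ∃ w, p z w ≠ 0 ∧ w ∉ U₂ := by
  induction m generalizing v with
  | zero =>
    rw [escProb_succ] at h
    split at h
    · rename_i hv
      obtain ⟨w, _, hw⟩ := Finset.exists_ne_zero_of_sum_ne_zero h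
      have h0 : escProb p U₂ F 0 z w ≠ 0 := left_ne_zero_of_mul hw
      rw [escProb_zero] at h0
      by_cases hc : z = w ∧ z ∈ U₂ ∧ z ∈ F
      · refine ⟨v, ?_, hv.2⟩
        rcases hc with ⟨rfl, -, -⟩
        exact right_ne_zero_of_mul hw
      · rw [if_neg hc] at h0; exact absurd rfl h0
    · exact absurd rfl h
  | succ m ih =>
    rw [escProb_succ] at h
    split at h
    · obtain ⟨w, _, hw⟩ := Finset.exists_ne_zero_of_sum_ne_zero h
      exact ih w (left_ne_zero_of_mul hw)
    · exact absurd rfl h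

/-- Last-exit decomposition of the killed transition probabilities through `U₂`. -/
theorem stay_eq_sum_esc (U₂ : Set E) {x : E} (hx2 : x ∈ U₂) (n : ℕ) (v : E) :
    stayProb p (↑F) n x v
      = ∑ l ∈ Finset.range (n+1), ∑ z ∈ F,
          stayProb p (↑F) l x z * escProb p U₂ F (n-l) z v := by
  induction n generalizing v with
  | zero =>
    rw [Finset.sum_range_one]
    have h1 : ∀ z ∈ F, stayProb p (↑F) 0 x z * escProb p U₂ F 0 z v
        = if z = x then (if x ∈ F then escProb p U₂ F 0 x v else 0) else 0 := by
      intro z hz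
      rw [stayProb_zero']
      by_cases h : z = x
      · rw [h]; by_cases hxF : x ∈ F
        · simp [hxF]
        · simp [hxF]
      · rw [if_neg h, if_neg, zero_mul]
        rintro ⟨h2, -⟩; exact h h2.symm
    rw [Finset.sum_congr rfl h1, Finset.sum_ite_eq' F x]
    by_cases hxF : x ∈ F
    · rw [if_pos hxF, if_pos hxF, escProb_zero, stayProb_zero']
      by_cases h : x = v
      · subst h; simp [hx2, hxF]
      · rw [if_neg (by rintro ⟨h2,-⟩; exact h h2), if_neg (by rintro ⟨h2,-⟩; exact h h2)]
    · rw [if_neg hxF, stay_left_nmem p F 0 hxF]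
  | succ n ih =>
    rw [Finset.sum_range_succ]
    have hlast : ∑ z ∈ F, stayProb p (↑F) (n+1) x z * escProb p U₂ F (n+1-(n+1)) z v
        = if v ∈ U₂ ∧ v ∈ F then stayProb p (↑F) (n+1) x v else 0 := by
      have h1 : ∀ z ∈ F, stayProb p (↑F) (n+1) x z * escProb p U₂ F (n+1-(n+1)) z v
          = if z = v then (if v ∈ U₂ ∧ v ∈ F then stayProb p (↑F) (n+1) x v else 0) else 0 := by
        intro z hz
        rw [Nat.sub_self, escProb_zero]
        by_cases h : z = v
        · subst h
          by_cases hc : z ∈ U₂ ∧ z ∈ F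
          · simp [hc]
          · rw [if_neg (by rintro ⟨-, h2⟩; exact hc h2), if_pos rfl, if_neg hc, mul_zero]
        · rw [if_neg (by rintro ⟨h2,-⟩; exact h h2), if_neg h, mul_zero]
      rw [Finset.sum_congr rfl h1, Finset.sum_ite_eq' F v]
      by_cases hv : v ∈ F
      · rw [if_pos hv]
      · rw [if_neg hv, if_neg (by rintro ⟨-, h2⟩; exact hv h2)]
    rw [hlast]
    have hshift : ∀ l ∈ Finset.range (n+1), ∑ z ∈ F,
        stayProb p (↑F) l x z * escProb p U₂ F (n+1-l) z v
        = ∑ z ∈ F, stayProb p (↑F) l x z * escProb p U₂ F ((n-l)+1) z v := by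
      intro l hl
      have : n + 1 - l = (n - l) + 1 := by
        rw [Nat.succ_sub (Nat.lt_succ_iff.mp (Finset.mem_range.mp hl))]
      rw [this]
    rw [Finset.sum_congr rfl hshift]
    by_cases hv : v ∈ F ∧ v ∉ U₂
    · -- boundary-crossing case
      have hz2 : (if v ∈ U₂ ∧ v ∈ F then stayProb p (↑F) (n+1) x v else 0) = 0 := by
        rw [if_neg (by rintro ⟨h2, -⟩; exact hv.2 h2)]
      rw [hz2, add_zero]
      calc stayProb p (↑F) (n+1) x v
          = ∑ w ∈ F, stayProb p (↑F) n x w * p w v := by rw [stay_last, if_pos hv.1]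
        _ = ∑ w ∈ F, (∑ l ∈ Finset.range (n+1), ∑ z ∈ F,
              stayProb p (↑F) l x z * escProb p U₂ F (n-l) z w) * p w v := by
            refine Finset.sum_congr rfl fun w _ => ?_
            rw [ih w]
        _ = ∑ l ∈ Finset.range (n+1), ∑ w ∈ F, (∑ z ∈ F,
              stayProb p (↑F) l x z * escProb p U₂ F (n-l) z w) * p w v := by
            rw [Finset.sum_comm]
            refine Finset.sum_congr rfl fun w _ => ?_
            rw [Finset.sum_mul]
        _ = ∑ l ∈ Finset.range (n+1), ∑ z ∈ F,
              stayProb p (↑F) l x z * escProb p U₂ F ((n-l)+1) z v := by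
            refine Finset.sum_congr rfl fun l _ => ?_
            have e1 : ∀ w ∈ F, (∑ z ∈ F, stayProb p (↑F) l x z * escProb p U₂ F (n-l) z w) * p w v
                = ∑ z ∈ F, stayProb p (↑F) l x z * escProb p U₂ F (n-l) z w * p w v :=
              fun w _ => Finset.sum_mul _ _ _
            rw [Finset.sum_congr rfl e1, Finset.sum_comm]
            refine Finset.sum_congr rfl fun z _ => ?_
            rw [escProb_succ, if_pos hv, Finset.mul_sum]
            exact Finset.sum_congr rfl fun w _ => by ring
    · -- no crossing possible at `v`
      have hzero : ∀ l ∈ Finset.range (n+1), ∑ z ∈ F,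
          stayProb p (↑F) l x z * escProb p U₂ F ((n-l)+1) z v = 0 := by
        intro l _
        refine Finset.sum_eq_zero fun z _ => ?_
        rw [escProb_succ, if_neg hv, mul_zero]
      rw [Finset.sum_congr rfl hzero, Finset.sum_const, smul_zero, zero_add]
      by_cases hvF : v ∈ F
      · have hv2 : v ∈ U₂ := by
          by_contra h2; exact hv ⟨hvF, h2⟩
        rw [if_pos ⟨hv2, hvF⟩]
      · rw [if_neg (by rintro ⟨-, h2⟩; exact hvF h2), stay_right_nmem p F _ x hvF]

variable {p F} in
/-- Representation of a harmonic function via the killed Green function and the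
last-exit decomposition through `U₂`. -/
theorem green_rep (U₂ : Set E) (u c : E → ℝ) (C : ℝ)
    (hp : ∀ x y, 0 ≤ p x y)
    (hharm : ∀ w ∈ F, u w = c w + ∑ v ∈ F, p w v * u v)
    (hc0 : ∀ w ∈ F, 0 ≤ c w) (hcC : ∀ w ∈ F, c w ≤ C)
    (hu0 : ∀ w ∈ F, 0 ≤ u w) (huC : ∀ w ∈ F, u w ≤ C)
    (hmass : ∀ x : E, Summable (fun n => massStay p F n x))
    {x : E} (hx2 : x ∈ U₂) (hxF : x ∈ F) :
    u x = ∑ z ∈ F, greenKilled p (↑F) x z *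
        (∑' m : ℕ, ∑ w ∈ F, escProb p U₂ F m z w * c w) := by
  set A : ℕ → ℝ := fun n => ∑ v ∈ F, stayProb p (↑F) n x v * u v with hA
  set B : ℕ → ℝ := fun n => ∑ w ∈ F, stayProb p (↑F) n x w * c w with hB
  set e : ℕ → E → ℝ := fun m z => ∑ w ∈ F, escProb p U₂ F m z w * c w with he
  have hstep : ∀ n, A (n+1) = A n - B n := by
    intro n
    have h1 : ∀ v ∈ F, stayProb p (↑F) (n+1) x v * u v
        = ∑ w ∈ F, stayProb p (↑F) n x w * (p w v * u v) := by
      intro v hv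
      rw [stay_last, if_pos hv, Finset.sum_mul]
      exact Finset.sum_congr rfl fun w _ => by ring
    calc A (n+1) = ∑ v ∈ F, ∑ w ∈ F, stayProb p (↑F) n x w * (p w v * u v) :=
          Finset.sum_congr rfl h1
      _ = ∑ w ∈ F, ∑ v ∈ F, stayProb p (↑F) n x w * (p w v * u v) := Finset.sum_comm
      _ = ∑ w ∈ F, stayProb p (↑F) n x w * (u w - c w) := by
          refine Finset.sum_congr rfl fun w hw => ?_
          rw [← Finset.mul_sum]
          have : ∑ v ∈ F, p w v * u v = u w - c w := by
            have := hharm w hw; linarith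
          rw [this]
      _ = A n - B n := by
          rw [hA, hB, ← Finset.sum_sub_distrib]
          exact Finset.sum_congr rfl fun w _ => by ring
  have hA0 : A 0 = u x := by
    show (∑ v ∈ F, stayProb p (↑F) 0 x v * u v) = u x
    have h1 : ∀ v ∈ F, stayProb p (↑F) 0 x v * u v
        = if v = x then u x else 0 := by
      intro v hv
      rw [stayProb_zero']
      by_cases h : v = x
      · rw [h, if_pos ⟨rfl, by simpa using hxF⟩, one_mul, if_pos rfl]
      · rw [if_neg (by rintro ⟨h2, -⟩; exact h h2.symm), if_neg h, zero_mul]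
    rw [Finset.sum_congr rfl h1, Finset.sum_ite_eq' F x, if_pos hxF]
  have hpartial : ∀ M, ∑ n ∈ Finset.range M, B n = u x - A M := by
    intro M
    induction M with
    | zero => simp [hA0]
    | succ M ih =>
      rw [Finset.sum_range_succ, ih]
      have := hstep M
      linarith
  have hC0 : 0 ≤ C := le_trans (hu0 x hxF) (huC x hxF)
  have hAnn : ∀ M, 0 ≤ A M :=
    fun M => Finset.sum_nonneg fun v hv =>
      mul_nonneg (stay_nonneg F hp M x v) (hu0 v hv)
  have hAle : ∀ M, A M ≤ C * massStay p F M x := by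
    intro M
    calc A M = ∑ v ∈ F, stayProb p (↑F) M x v * u v := rfl
      _ ≤ ∑ v ∈ F, C * stayProb p (↑F) M x v := by
          refine Finset.sum_le_sum fun v hv => ?_
          calc stayProb p (↑F) M x v * u v ≤ stayProb p (↑F) M x v * C :=
                mul_le_mul_of_nonneg_left (huC v hv) (stay_nonneg F hp M x v)
            _ = C * stayProb p (↑F) M x v := mul_comm _ _
      _ = C * massStay p F M x := by unfold massStay; rw [Finset.mul_sum]
  have hB0 : ∀ n, 0 ≤ B n :=
    fun n => Finset.sum_nonneg fun w hw =>
      mul_nonneg (stay_nonneg F hp n x w) (hc0 w hw)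
  have hBle : ∀ n, B n ≤ C * massStay p F n x := by
    intro n
    calc B n = ∑ w ∈ F, stayProb p (↑F) n x w * c w := rfl
      _ ≤ ∑ w ∈ F, C * stayProb p (↑F) n x w := by
          refine Finset.sum_le_sum fun w hw => ?_
          calc stayProb p (↑F) n x w * c w ≤ stayProb p (↑F) n x w * C :=
                mul_le_mul_of_nonneg_left (hcC w hw) (stay_nonneg F hp n x w)
            _ = C * stayProb p (↑F) n x w := mul_comm _ _
      _ = C * massStay p F n x := by unfold massStay; rw [Finset.mul_sum]
  have hBsum : Summable B := Summable.of_nonneg_of_le hB0 hBle ((hmass x).mul_left C)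
  have hmass0 : Filter.Tendsto (fun n => massStay p F n x) Filter.atTop (nhds 0) :=
    (hmass x).tendsto_atTop_zero
  have hAtend : Filter.Tendsto A Filter.atTop (nhds 0) := by
    refine squeeze_zero hAnn hAle ?_
    have := hmass0.const_mul C
    simpa using this
  have htsumB : ∑' n, B n = u x := by
    have h1 : Filter.Tendsto (fun M => ∑ n ∈ Finset.range M, B n)
        Filter.atTop (nhds (∑' n, B n)) := hBsum.hasSum.tendsto_sum_nat
    have h2 : Filter.Tendsto (fun M => ∑ n ∈ Finset.range M, B n)
        Filter.atTop (nhds (u x)) := by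
      have h3 : Filter.Tendsto (fun M => u x - A M) Filter.atTop (nhds (u x - 0)) :=
        (tendsto_const_nhds).sub hAtend
      rw [sub_zero] at h3
      refine h3.congr fun M => (hpartial M).symm
    exact tendsto_nhds_unique h1 h2
  have hBeq : ∀ n, B n = ∑ z ∈ F, ∑ l ∈ Finset.range (n+1),
      stayProb p (↑F) l x z * e (n-l) z := by
    intro n
    calc B n = ∑ w ∈ F, (∑ l ∈ Finset.range (n+1), ∑ z ∈ F,
          stayProb p (↑F) l x z * escProb p U₂ F (n-l) z w) * c w := by
          refine Finset.sum_congr rfl fun w _ => ?_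
          rw [stay_eq_sum_esc p F U₂ hx2 n w]
      _ = ∑ w ∈ F, ∑ l ∈ Finset.range (n+1), ∑ z ∈ F,
          stayProb p (↑F) l x z * escProb p U₂ F (n-l) z w * c w := by
          refine Finset.sum_congr rfl fun w _ => ?_
          rw [Finset.sum_mul]
          exact Finset.sum_congr rfl fun l _ => Finset.sum_mul _ _ _
      _ = ∑ l ∈ Finset.range (n+1), ∑ w ∈ F, ∑ z ∈ F,
          stayProb p (↑F) l x z * escProb p U₂ F (n-l) z w * c w := Finset.sum_comm
      _ = ∑ l ∈ Finset.range (n+1), ∑ z ∈ F, ∑ w ∈ F,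
          stayProb p (↑F) l x z * escProb p U₂ F (n-l) z w * c w := by
          exact Finset.sum_congr rfl fun l _ => Finset.sum_comm
      _ = ∑ l ∈ Finset.range (n+1), ∑ z ∈ F,
          stayProb p (↑F) l x z * e (n-l) z := by
          refine Finset.sum_congr rfl fun l _ => Finset.sum_congr rfl fun z _ => ?_
          rw [show e (n-l) z = ∑ w ∈ F, escProb p U₂ F (n-l) z w * c w from rfl,
            Finset.mul_sum]
          exact Finset.sum_congr rfl fun w _ => by ring
      _ = ∑ z ∈ F, ∑ l ∈ Finset.range (n+1),
          stayProb p (↑F) l x z * e (n-l) z := Finset.sum_comm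
  have he0 : ∀ m z, 0 ≤ e m z :=
    fun m z => Finset.sum_nonneg fun w hw =>
      mul_nonneg (esc_nonneg F hp U₂ m z w) (hc0 w hw)
  have hesum : ∀ z : E, Summable (fun m => e m z) := by
    intro z
    refine Summable.of_nonneg_of_le (fun m => he0 m z) (fun m => ?_)
      ((hmass z).mul_left C)
    show (∑ w ∈ F, escProb p U₂ F m z w * c w) ≤ C * massStay p F m z
    unfold massStay
    rw [Finset.mul_sum]
    refine Finset.sum_le_sum fun w hw => ?_
    calc escProb p U₂ F m z w * c w ≤ stayProb p (↑F) m z w * C := by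
          refine mul_le_mul (esc_le_stay F hp U₂ m z w) (hcC w hw) (hc0 w hw)
            (stay_nonneg F hp m z w)
      _ = C * stayProb p (↑F) m z w := mul_comm _ _
  have hssum : ∀ z : E, Summable (fun l => stayProb p (↑F) l x z) :=
    fun z => summable_stay hp (hmass x) z
  have hsnorm : ∀ z : E, Summable (fun l => ‖stayProb p (↑F) l x z‖) := by
    intro z
    refine (hssum z).abs.congr fun l => ?_
    rw [Real.norm_eq_abs]
  have henorm : ∀ z : E, Summable (fun m => ‖e m z‖) := by
    intro z
    refine (hesum z).abs.congr fun m => ?_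
    rw [Real.norm_eq_abs]
  have hconv : ∀ z ∈ F, Summable (fun n => ∑ l ∈ Finset.range (n+1),
      stayProb p (↑F) l x z * e (n-l) z) := by
    intro z _
    exact (summable_norm_sum_mul_range_of_summable_norm (hsnorm z) (henorm z)).of_norm
  calc u x = ∑' n, B n := htsumB.symm
    _ = ∑' n, ∑ z ∈ F, ∑ l ∈ Finset.range (n+1),
        stayProb p (↑F) l x z * e (n-l) z := tsum_congr hBeq
    _ = ∑ z ∈ F, ∑' n, ∑ l ∈ Finset.range (n+1),
        stayProb p (↑F) l x z * e (n-l) z := Summable.tsum_finsetSum hconv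
    _ = ∑ z ∈ F, greenKilled p (↑F) x z * (∑' m : ℕ, e m z) := by
        refine Finset.sum_congr rfl fun z _ => ?_
        rw [greenKilled]
        exact (tsum_mul_tsum_eq_tsum_sum_range_of_summable_norm (hsnorm z) (henorm z)).symm

variable {p F} in
theorem green_pos {G : SimpleGraph E}
    (hp : ∀ x y, 0 ≤ p x y) (hp_pos : ∀ a b, G.Adj a b → 0 < p a b)
    {y z : E} (hy : y ∈ F)
    (hmassy : Summable (fun n => massStay p F n y))
    (hchain : Relation.ReflTransGen (fun a b => a ∈ F ∧ b ∈ F ∧ G.Adj a b) y z) :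
    0 < greenKilled p (↑F) y z := by
  have hex : ∃ l, 0 < stayProb p (↑F) l y z := by
    induction hchain with
    | refl => exact ⟨0, by rw [stayProb_zero', if_pos ⟨rfl, by simpa using hy⟩]; norm_num⟩
    | @tail b c hab hrel ih =>
      obtain ⟨l, hl⟩ := ih
      refine ⟨l+1, ?_⟩
      rw [stay_last, if_pos hrel.2.1]
      have h1 : stayProb p (↑F) l y b * p b c ≤ ∑ v ∈ F, stayProb p (↑F) l y v * p v c :=
        Finset.single_le_sum (f := fun v => stayProb p (↑F) l y v * p v c)
          (fun v _ => mul_nonneg (stay_nonneg F hp l y v) (hp v c)) hrel.1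
      have h2 : 0 < stayProb p (↑F) l y b * p b c :=
        mul_pos hl (hp_pos b c hrel.2.2)
      linarith
  obtain ⟨l, hl⟩ := hex
  have hsum : Summable (fun k => stayProb p (↑F) k y z) := summable_stay hp hmassy z
  calc (0:ℝ) < stayProb p (↑F) l y z := hl
    _ ≤ ∑' k, stayProb p (↑F) k y z := Summable.le_tsum hsum l fun j _ => stay_nonneg F hp j y z
    _ = greenKilled p (↑F) y z := rfl

end HarnackAux

/-- Lemma A.2: Harnack-type bound via killed Green functions, for an irreducible elliptic
nearest-neighbor Markov chain on a connected countable graph. If `∅ ≠ U₁ ⊆ U₂ ⊆ U₃` are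
finite strict subsets of the vertex set, `U₃` is connected, and `u` is a bounded
nonnegative function on `Ū₃` harmonic in `U₃`, then `max_{U₁} u ≤ K min_{U₁} u` with
`K = max_{x,y ∈ U₁} max_{z ∈ ∂_int U₂} G_{U₃}(x,z)/G_{U₃}(y,z)`. -/
theorem harnack_via_killed_green
    {E : Type*} [Countable E] (G : SimpleGraph E) (hconn : G.Connected)
    (p : E → E → ℝ)
    (hp_nonneg : ∀ x y, 0 ≤ p x y)
    (hp_sum : ∀ x, HasSum (p x) 1)
    (hp_supp : ∀ x y, p x y ≠ 0 → x = y ∨ G.Adj x y)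
    (hp_pos : ∀ x y, G.Adj x y → 0 < p x y)
    (h_irred : ∀ x y, ∃ n : ℕ, 0 < transPow p n x y)
    (U₁ U₂ U₃ : Set E)
    (h1ne : U₁.Nonempty) (h12 : U₁ ⊆ U₂) (h23 : U₂ ⊆ U₃)
    (h3fin : U₃.Finite) (h3strict : U₃ ≠ Set.univ)
    (h3conn : ∀ x ∈ U₃, ∀ y ∈ U₃,
      Relation.ReflTransGen (fun a b => a ∈ U₃ ∧ b ∈ U₃ ∧ G.Adj a b) x y)
    (u : E → ℝ)
    (hu_bdd : ∃ C : ℝ, ∀ x ∈ U₃ ∪ {x | ∃ y ∈ U₃, G.Adj x y}, |u x| ≤ C)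
    (hu_nonneg : ∀ x ∈ U₃ ∪ {x | ∃ y ∈ U₃, G.Adj x y}, 0 ≤ u x)
    (hu_harm : ∀ x ∈ U₃, (∑' y, p x y * u y) = u x) :
    ∀ x ∈ U₁, ∀ y ∈ U₁,
      u x ≤ sSup {r : ℝ | ∃ a ∈ U₁, ∃ b ∈ U₁,
          ∃ z ∈ {z | z ∈ U₂ ∧ ∃ w, w ∉ U₂ ∧ G.Adj z w},
          r = greenKilled p U₃ a z / greenKilled p U₃ b z} * u y := by
  intro x hx1 y hy1
  set S : Set ℝ := {r : ℝ | ∃ a ∈ U₁, ∃ b ∈ U₁,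
      ∃ z ∈ {z | z ∈ U₂ ∧ ∃ w, w ∉ U₂ ∧ G.Adj z w},
      r = greenKilled p U₃ a z / greenKilled p U₃ b z} with hS
  obtain ⟨C, hC⟩ := hu_bdd
  set F : Finset E := h3fin.toFinset with hFdef
  have hF : (↑F : Set E) = U₃ := h3fin.coe_toFinset
  have hmemF : ∀ {a : E}, a ∈ U₃ → a ∈ F := fun ha => h3fin.mem_toFinset.mpr ha
  have hFmem : ∀ {a : E}, a ∈ F → a ∈ U₃ := fun ha => h3fin.mem_toFinset.mp ha
  have hxF : x ∈ F := hmemF (h23 (h12 hx1))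
  have hyF : y ∈ F := hmemF (h23 (h12 hy1))
  have huF0 : ∀ w ∈ F, 0 ≤ u w := fun w hw => hu_nonneg w (Or.inl (hFmem hw))
  have huFC : ∀ w ∈ F, u w ≤ C :=
    fun w hw => le_trans (le_abs_self _) (hC w (Or.inl (hFmem hw)))
  have humem : ∀ {w v : E}, w ∈ F → p w v ≠ 0 →
      v ∈ U₃ ∪ {x | ∃ y ∈ U₃, G.Adj x y} := by
    intro w v hw h
    rcases hp_supp w v h with heq | hadj
    · rw [← heq]; exact Or.inl (hFmem hw)
    · exact Or.inr ⟨w, hFmem hw, hadj.symm⟩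
  set c : E → ℝ := fun w => u w - ∑ v ∈ F, p w v * u v with hc
  have hpsummable : ∀ w ∈ F, Summable (fun v => p w v * u v) := by
    intro w hw
    refine Summable.of_nonneg_of_le (fun v => ?_) (fun v => ?_)
      ((hp_sum w).summable.mul_left C)
    · by_cases h : p w v = 0
      · rw [h, zero_mul]
      · exact mul_nonneg (hp_nonneg w v) (hu_nonneg v (humem hw h))
    · by_cases h : p w v = 0
      · rw [h, zero_mul, mul_zero]
      · have hub : u v ≤ C := le_trans (le_abs_self _) (hC v (humem hw h))
        calc p w v * u v ≤ p w v * C := mul_le_mul_of_nonneg_left hub (hp_nonneg w v)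
          _ = C * p w v := mul_comm _ _
  have hharm' : ∀ w ∈ F, (∑' v, p w v * u v) = u w := fun w hw => hu_harm w (hFmem hw)
  have hcsplit : ∀ w ∈ F, c w = u w - ∑ v ∈ F, p w v * u v := fun w _ => rfl
  have hcompl : ∀ w ∈ F, c w = ∑' v : ↑((↑F : Set E)ᶜ), p w ↑v * u ↑v := by
    intro w hw
    have h0 := Summable.sum_add_tsum_compl (s := F) (hpsummable w hw)
    rw [hharm' w hw] at h0
    rw [hcsplit w hw]
    linarith
  have hc0 : ∀ w ∈ F, 0 ≤ c w := by
    intro w hw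
    rw [hcompl w hw]
    refine tsum_nonneg fun v => ?_
    by_cases h : p w ↑v = 0
    · rw [h, zero_mul]
    · exact mul_nonneg (hp_nonneg w ↑v) (hu_nonneg ↑v (humem hw h))
  have hcC : ∀ w ∈ F, c w ≤ C := by
    intro w hw
    have h1 : 0 ≤ ∑ v ∈ F, p w v * u v :=
      Finset.sum_nonneg fun v hv => mul_nonneg (hp_nonneg w v) (huF0 v hv)
    have h2 := hcsplit w hw
    have h3 := huFC w hw
    linarith
  have hharmsplit : ∀ w ∈ F, u w = c w + ∑ v ∈ F, p w v * u v := by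
    intro w hw
    rw [hcsplit w hw]; ring
  obtain ⟨o, ho3⟩ := (Set.ne_univ_iff_exists_notMem U₃).mp h3strict
  have hoF : o ∉ F := fun h => ho3 (hFmem h)
  have hexit' : ∀ w : E, ∃ n, (w ∈ F → massStay p F n w < 1) := by
    intro w
    by_cases hw : w ∈ F
    · obtain ⟨q⟩ := hconn.preconnected w o
      obtain ⟨n, hn⟩ := exists_mass_lt_one hp_nonneg hp_sum hp_pos q hoF hw
      exact ⟨n, fun _ => hn⟩
    · exact ⟨0, fun h => absurd h hw⟩
  choose nf hnf using hexit'
  have hFne : F.Nonempty := ⟨x, hxF⟩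
  set N : ℕ := F.sup nf with hN
  set ρ : ℝ := F.sup' hFne (fun w => massStay p F N w) with hρ
  have hρw : ∀ w ∈ F, massStay p F N w ≤ ρ :=
    fun w hw => Finset.le_sup' (fun w => massStay p F N w) hw
  have hρ1 : ρ < 1 := by
    rw [hρ, Finset.sup'_lt_iff]
    intro w hw
    exact lt_of_le_of_lt (mass_anti F hp_nonneg hp_sum (Finset.le_sup hw) w) (hnf w hw)
  have hmass : ∀ a : E, Summable fun n => massStay p F n a :=
    fun a => summable_mass hp_nonneg hp_sum N ρ hρ1 hρw a
  have hrepx : u x = ∑ z ∈ F, greenKilled p (↑F) x z *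
      (∑' m : ℕ, ∑ w ∈ F, escProb p U₂ F m z w * c w) :=
    green_rep U₂ u c C hp_nonneg hharmsplit hc0 hcC huF0 huFC hmass (h12 hx1) hxF
  have hrepy : u y = ∑ z ∈ F, greenKilled p (↑F) y z *
      (∑' m : ℕ, ∑ w ∈ F, escProb p U₂ F m z w * c w) :=
    green_rep U₂ u c C hp_nonneg hharmsplit hc0 hcC huF0 huFC hmass (h12 hy1) hyF
  have hSfin : S.Finite := by
    have h1fin : U₁.Finite := h3fin.subset fun a ha => h23 (h12 ha)
    have h2fin : U₂.Finite := h3fin.subset h23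
    refine Set.Finite.subset (Set.Finite.image
      (fun q : E × E × E => greenKilled p U₃ q.1 q.2.2 / greenKilled p U₃ q.2.1 q.2.2)
      (h1fin.prod (h1fin.prod h2fin))) ?_
    rintro r ⟨a, ha, b, hb, z, hz, rfl⟩
    exact ⟨(a, b, z), ⟨ha, hb, hz.1⟩, rfl⟩
  have hSbdd : BddAbove S := hSfin.bddAbove
  have heps0 : ∀ z : E, 0 ≤ ∑' m : ℕ, ∑ w ∈ F, escProb p U₂ F m z w * c w :=
    fun z => tsum_nonneg fun m => Finset.sum_nonneg fun w hw =>
      mul_nonneg (esc_nonneg F hp_nonneg U₂ m z w) (hc0 w hw)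
  have hkey : ∀ z ∈ F, greenKilled p (↑F) x z *
      (∑' m : ℕ, ∑ w ∈ F, escProb p U₂ F m z w * c w)
      ≤ sSup S * (greenKilled p (↑F) y z *
      (∑' m : ℕ, ∑ w ∈ F, escProb p U₂ F m z w * c w)) := by
    intro z hzF
    by_cases hez : (∑' m : ℕ, ∑ w ∈ F, escProb p U₂ F m z w * c w) = 0
    · rw [hez, mul_zero, mul_zero, mul_zero]
    · have hmne : ∃ m : ℕ, (∑ w ∈ F, escProb p U₂ F m z w * c w) ≠ 0 := by
        by_contra h
        push_neg at h
        exact hez (by rw [tsum_congr h, tsum_zero])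
      obtain ⟨m, hm⟩ := hmne
      obtain ⟨w, hwF, hw⟩ := Finset.exists_ne_zero_of_sum_ne_zero hm
      have hresc : escProb p U₂ F m z w ≠ 0 := left_ne_zero_of_mul hw
      have hz2 : z ∈ U₂ := (esc_supp p F U₂ m z w hresc).1
      have hbd : ∃ w', w' ∉ U₂ ∧ G.Adj z w' := by
        cases m with
        | zero =>
          have hcz : c z ≠ 0 := by
            rw [escProb_zero] at hresc
            by_cases hcnd : z = w ∧ z ∈ U₂ ∧ z ∈ F
            · rcases hcnd with ⟨rfl, -, -⟩
              exact right_ne_zero_of_mul hw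
            · rw [if_neg hcnd] at hresc; exact absurd rfl hresc
          rw [hcompl z hzF] at hcz
          have hvex : ∃ v : ↑((↑F : Set E)ᶜ), p z ↑v * u ↑v ≠ 0 := by
            by_contra hall
            push_neg at hall
            exact hcz (by rw [tsum_congr hall, tsum_zero])
          obtain ⟨⟨v, hvc⟩, hv⟩ := hvex
          have hpz : p z v ≠ 0 := left_ne_zero_of_mul hv
          have hvF : v ∉ F := by simpa using hvc
          have hvU2 : v ∉ U₂ := fun h => hvF (hmemF (h23 h))
          rcases hp_supp z v hpz with heq | hadj
          · exact absurd (heq ▸ hzF) hvF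
          · exact ⟨v, hvU2, hadj⟩
        | succ m =>
          obtain ⟨w', hpw', hw'2⟩ := esc_first p F U₂ m z w hresc
          rcases hp_supp z w' hpw' with heq | hadj
          · exact absurd (heq ▸ hz2) hw'2
          · exact ⟨w', hw'2, hadj⟩
      have hchainz : Relation.ReflTransGen
          (fun a b => a ∈ F ∧ b ∈ F ∧ G.Adj a b) y z :=
        Relation.ReflTransGen.mono
          (fun a b hab => ⟨hmemF hab.1, hmemF hab.2.1, hab.2.2⟩)
          _ _ (h3conn y (hFmem hyF) z (hFmem hzF))
      have hGy : 0 < greenKilled p (↑F) y z :=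
        green_pos hp_nonneg hp_pos hyF (hmass y) hchainz
      have hmemS : greenKilled p U₃ x z / greenKilled p U₃ y z ∈ S :=
        ⟨x, hx1, y, hy1, z, ⟨hz2, hbd⟩, rfl⟩
      have hKle := le_csSup hSbdd hmemS
      rw [← hF] at hKle
      rw [div_le_iff₀ hGy] at hKle
      have hGxle : greenKilled p (↑F) x z ≤ sSup S * greenKilled p (↑F) y z := hKle
      calc greenKilled p (↑F) x z * (∑' m : ℕ, ∑ w ∈ F, escProb p U₂ F m z w * c w)
          ≤ (sSup S * greenKilled p (↑F) y z) *
            (∑' m : ℕ, ∑ w ∈ F, escProb p U₂ F m z w * c w) :=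
            mul_le_mul_of_nonneg_right hGxle (heps0 z)
        _ = sSup S * (greenKilled p (↑F) y z *
            (∑' m : ℕ, ∑ w ∈ F, escProb p U₂ F m z w * c w)) := by ring
  have hfinal : u x ≤ ∑ z ∈ F, sSup S * (greenKilled p (↑F) y z *
      (∑' m : ℕ, ∑ w ∈ F, escProb p U₂ F m z w * c w)) := by
    rw [hrepx]
    exact Finset.sum_le_sum hkey
  rw [← Finset.mul_sum, ← hrepy] at hfinal
  exact hfinal
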